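/- Let s ≥ t ≥ 6 be integers. Every (s,t)-path has an (s−2, t−6)-path as a pivot-minor. -/

import Mathlib

open SimpleGraph

universe u v

/-! ### Basic graph operations: flips, local complementation, pivoting, pivot-minors -/

/-- Flip the adjacency of `G` exactly at the pairs of distinct vertices where the
(symmetrized) predicate `p` holds. -/
def sdFlip {V : Type u} (G : SimpleGraph V) (p : V → V → Prop) : SimpleGraph V where
  Adj x y := x ≠ y ∧ Xor' (G.Adj x y) (p x y ∨ p y x)
  symm := by
    constructor
    intro x y h
    refine ⟨h.1.symm, ?_⟩
    have h2 := h.2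
    rwa [G.adj_comm x y, or_comm] at h2
  loopless := by
    constructor
    intro x h
    exact h.1 rfl

/-- Local complementation `G * v`: complement the adjacency inside the neighborhood of `v`. -/
def localComp {V : Type u} (G : SimpleGraph V) (v : V) : SimpleGraph V :=
  sdFlip G (fun x y => G.Adj v x ∧ G.Adj v y)

/-- Pivoting an edge `uv`: `G ∧ uv = G * u * v * u`. -/
def pivot {V : Type u} (G : SimpleGraph V) (u v : V) : SimpleGraph V :=
  localComp (localComp (localComp G u) v) u

/-- Applying a sequence of pivots. -/
def pivotSeq {V : Type u} (G : SimpleGraph V) : List (V × V) → SimpleGraph V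
  | [] => G
  | e :: l => pivotSeq (pivot G e.1 e.2) l

/-- Each pivot in the sequence is performed on an edge of the current graph. -/
def ValidPivots {V : Type u} (G : SimpleGraph V) : List (V × V) → Prop
  | [] => True
  | e :: l => G.Adj e.1 e.2 ∧ ValidPivots (pivot G e.1 e.2) l

/-- `H` is a pivot-minor of `G`: `H` is isomorphic to a graph obtained from `G` by a sequence of
pivotings (on edges of the current graph) and vertex deletions. -/
def IsPivotMinorOf {W : Type v} {V : Type u} (H : SimpleGraph W) (G : SimpleGraph V) : Prop :=
  ∃ (l : List (V × V)) (S : Set V), ValidPivots G l ∧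
    Nonempty (H ≃g (pivotSeq G l).induce S)

/-! ### The half-graph join `G △ H` -/

/-- `G △ H`: the disjoint union of `G` and `H` together with the half graph joining them:
the `i`-th vertex of `G` is adjacent to the `j`-th vertex of `H` iff `i ≥ j`. -/
def halfJoin {n : ℕ} (G H : SimpleGraph (Fin n)) : SimpleGraph (Fin n ⊕ Fin n) where
  Adj x y :=
    match x, y with
    | Sum.inl i, Sum.inl i' => G.Adj i i'
    | Sum.inr j, Sum.inr j' => H.Adj j j'
    | Sum.inl i, Sum.inr j => j ≤ i
    | Sum.inr j, Sum.inl i => j ≤ i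
  symm := by
    constructor
    rintro (i | i) (j | j) h
    · exact h.symm
    · exact h
    · exact h
    · exact h.symm
  loopless := by
    constructor
    rintro (i | i) h
    · exact G.ne_of_adj h rfl
    · exact H.ne_of_adj h rfl

/-! ### Flips by a set, by a pair of sets, and by a collection of sets -/

/-- The `X`-flip of `G`: complement the adjacency inside `X`. (The `∅`-flip is `G` itself.) -/
def setFlip {V : Type u} (G : SimpleGraph V) (X : Set V) : SimpleGraph V :=
  sdFlip G (fun x y => x ∈ X ∧ y ∈ X)

/-- `G * (X, Y)`: complement the adjacency between `X` and `Y`. -/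
def pairFlip {V : Type u} (G : SimpleGraph V) (X Y : Set V) : SimpleGraph V :=
  sdFlip G (fun x y => x ∈ X ∧ y ∈ Y)

open Classical in
/-- The member of the collection `P` containing `v`, if any, and `{v}` otherwise. -/
noncomputable def blockOf {V : Type u} (P : Set (Set V)) (v : V) : Set V :=
  if h : ∃ X ∈ P, v ∈ X then h.choose else {v}

/-- A subset `F ⊆ P²` is symmetric if `(X,X') ∈ F` implies `(X',X) ∈ F`. -/
def SymmRelSet {α : Type u} (F : Set (α × α)) : Prop :=
  ∀ a b : α, (a, b) ∈ F → (b, a) ∈ F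

/-- The `(P,F)`-flip `H ⊕ (P,F)` of `H`: distinct vertices `u,v` are adjacent iff
`H.Adj u v` XOR `(P(u), P(v)) ∈ F`. -/
noncomputable def collFlip {V : Type u} (H : SimpleGraph V) (P : Set (Set V))
    (F : Set (Set V × Set V)) : SimpleGraph V :=
  sdFlip H (fun x y => (blockOf P x, blockOf P y) ∈ F)

/-- `P` is a collection of pairwise disjoint non-empty subsets. -/
def IsDisjNonemptyColl {V : Type u} (P : Set (Set V)) : Prop :=
  (∀ X ∈ P, X.Nonempty) ∧ P.PairwiseDisjoint id

/-- `Q` is a coarsening of `P`: a collection of disjoint non-empty sets,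
each a union of members of `P`. -/
def IsCoarsening {α : Type u} (Q P : Set (Set α)) : Prop :=
  IsDisjNonemptyColl Q ∧ ∀ X ∈ Q, ∃ C ⊆ P, X = ⋃₀ C

/-! ### The graph `mPₙ` and flipped `mPₙ`'s -/

/-- `mPₙ`: the disjoint union of `m` copies of the path `Pₙ`, with vertex set `[m] × [n]`. -/
def pathsGraph (m n : ℕ) : SimpleGraph (Fin m × Fin n) where
  Adj x y := x.1 = y.1 ∧ (pathGraph n).Adj x.2 y.2
  symm := by
    constructor
    rintro ⟨i, a⟩ ⟨j, b⟩ ⟨h1, h2⟩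
    exact ⟨h1.symm, h2.symm⟩
  loopless := by
    constructor
    rintro ⟨i, a⟩ ⟨_, h⟩
    exact (pathGraph n).ne_of_adj h rfl

/-- The `j`-th column of `mPₙ`. -/
def column (m n : ℕ) (j : Fin n) : Set (Fin m × Fin n) := {p | p.2 = j}

/-- The column set of `mPₙ`. -/
def columnSet (m n : ℕ) : Set (Set (Fin m × Fin n)) := Set.range (column m n)

/-- A flipped `mPₙ`: a `P`-flip of `mPₙ` where `P` is a coarsening of the column set. -/
def IsFlippedPaths (m n : ℕ) (G : SimpleGraph (Fin m × Fin n)) : Prop :=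
  ∃ (P : Set (Set (Fin m × Fin n))) (F : Set (Set (Fin m × Fin n) × Set (Fin m × Fin n))),
    IsCoarsening P (columnSet m n) ∧ F ⊆ P ×ˢ P ∧ SymmRelSet F ∧
    G = collFlip (pathsGraph m n) P F

/-- A `k`-flipped `mPₙ`: a flipped `mPₙ` with `|P| ≤ k`. -/
def IsKFlippedPaths (k m n : ℕ) (G : SimpleGraph (Fin m × Fin n)) : Prop :=
  ∃ (P : Set (Set (Fin m × Fin n))) (F : Set (Set (Fin m × Fin n) × Set (Fin m × Fin n))),
    IsCoarsening P (columnSet m n) ∧ P.ncard ≤ k ∧ F ⊆ P ×ˢ P ∧ SymmRelSet F ∧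
    G = collFlip (pathsGraph m n) P F

/-! ### Cut-rank and rank-depth -/

open Classical in
/-- The cut-rank `ρ_G(S)`: the rank over GF(2) of the `S × (V ∖ S)` submatrix of the
adjacency matrix of `G`. -/
noncomputable def cutRank {V : Type u} [Fintype V] (G : SimpleGraph V) (S : Set V) : ℕ :=
  Matrix.rank (Matrix.of fun (i : S) (j : (Sᶜ : Set V)) =>
    if G.Adj (i : V) (j : V) then (1 : ZMod 2) else 0)

/-- The rank-depth of `G`: the least `k` such that `G` has a decomposition `(T, σ)` into a
tree `T` with the vertices of `G` identified with the leaves of `T` via `σ`, of width at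
most `k` and radius at most `k`.  The width condition is expressed as: for every non-leaf
node `v` of `T` and every set `S ⊆ V(G)` that is a union of parts of the partition of `V(G)`
induced by the components of `T - v`, we have `ρ_G(S) ≤ k`. -/
noncomputable def rankDepth {V : Type u} [Fintype V] (G : SimpleGraph V) : ℕ :=
  sInf {k : ℕ |
    ∃ (N : ℕ) (T : SimpleGraph (Fin N))
      (σ : V ≃ {x : Fin N // (T.neighborSet x).ncard ≤ 1}),
      T.IsTree ∧
      (∃ c : Fin N, ∀ x : Fin N, T.dist c x ≤ k) ∧
      (∀ x : Fin N, 1 < (T.neighborSet x).ncard →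
        ∀ S : Set V,
          (∀ a b : V, a ∈ S →
            (∃ w : T.Walk ((σ a : {x : Fin N // (T.neighborSet x).ncard ≤ 1}) : Fin N)
                ((σ b : {x : Fin N // (T.neighborSet x).ncard ≤ 1}) : Fin N),
              x ∉ w.support) → b ∈ S) →
          cutRank G S ≤ k)}

/-! ### Restrictions of collections, and the sets `C_F`, `L_F`, `R_F`, `D_F` -/

/-- The restriction `P|_{S}` of a collection of subsets of `V` to a subset `S`. -/
def restrictColl {V : Type u} (P : Set (Set V)) (S : Set V) : Set (Set S) :=
  {Y | ∃ X ∈ P, (Subtype.val ⁻¹' X : Set S).Nonempty ∧ Y = (Subtype.val ⁻¹' X : Set S)}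

/-- The restriction `F|_{S}` of a collection of pairs of subsets of `V` to a subset `S`. -/
def restrictF {V : Type u} (F : Set (Set V × Set V)) (S : Set V) : Set (Set S × Set S) :=
  {q | ∃ p ∈ F, (Subtype.val ⁻¹' p.1 : Set S).Nonempty ∧ (Subtype.val ⁻¹' p.2 : Set S).Nonempty ∧
      q = ((Subtype.val ⁻¹' p.1 : Set S), (Subtype.val ⁻¹' p.2 : Set S))}

/-- `C_F(X,X') = {Y ∈ P : (X,Y) ∈ F and (X',Y) ∈ F}`. -/
def CF {V : Type u} (P : Set (Set V)) (F : Set (Set V × Set V)) (X X' : Set V) : Set (Set V) :=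
  {Y ∈ P | (X, Y) ∈ F ∧ (X', Y) ∈ F}

/-- `L_F(X,X') = {Y ∈ P : (X,Y) ∈ F and (X',Y) ∉ F}`. -/
def LF {V : Type u} (P : Set (Set V)) (F : Set (Set V × Set V)) (X X' : Set V) : Set (Set V) :=
  {Y ∈ P | (X, Y) ∈ F ∧ (X', Y) ∉ F}

/-- `R_F(X,X') = {Y ∈ P : (X,Y) ∉ F and (X',Y) ∈ F}`. -/
def RF {V : Type u} (P : Set (Set V)) (F : Set (Set V × Set V)) (X X' : Set V) : Set (Set V) :=
  {Y ∈ P | (X, Y) ∉ F ∧ (X', Y) ∈ F}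

/-- `D_F(X,X') = (C×L) ∪ (C×R) ∪ (L×R) ∪ (L×C) ∪ (R×C) ∪ (R×L)`. -/
def DF {V : Type u} (P : Set (Set V)) (F : Set (Set V × Set V)) (X X' : Set V) :
    Set (Set V × Set V) :=
  (CF P F X X' ×ˢ LF P F X X') ∪ (CF P F X X' ×ˢ RF P F X X') ∪ (LF P F X X' ×ˢ RF P F X X') ∪
  (LF P F X X' ×ˢ CF P F X X') ∪ (RF P F X X' ×ˢ CF P F X X') ∪ (RF P F X X' ×ˢ LF P F X X')

/-- The set of `t` consecutive vertices of the path `P_s` starting at position `i` (0-indexed). -/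
def consec (s i t : ℕ) : Set (Fin s) := {x | i ≤ (x : ℕ) ∧ (x : ℕ) < i + t}

/-- An `(s,t)`-path: a graph isomorphic to the `X`-flip of `P_s` for a set `X` of `t`
consecutive vertices of `P_s`. -/
def IsSTPath (s t : ℕ) {W : Type v} (G : SimpleGraph W) : Prop :=
  ∃ i : ℕ, i + t ≤ s ∧ Nonempty (G ≃g setFlip (pathGraph s) (consec s i t))

/-! ## Statement 15 -/
/-! ### Auxiliary lemmas for the proof -/

lemma sdFlip_adj {V : Type*} (G : SimpleGraph V) (p : V → V → Prop) (x y : V) :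
    (sdFlip G p).Adj x y ↔ x ≠ y ∧ Xor' (G.Adj x y) (p x y ∨ p y x) := Iff.rfl

lemma localComp_adj {V : Type*} (G : SimpleGraph V) (v x y : V) :
    (localComp G v).Adj x y ↔
      x ≠ y ∧ Xor' (G.Adj x y) ((G.Adj v x ∧ G.Adj v y) ∨ (G.Adj v y ∧ G.Adj v x)) := Iff.rfl

/-- Transport of `pivot` along an isomorphism. -/
def pivotIsoAux {V : Type u} {V' : Type v} {G : SimpleGraph V} {G' : SimpleGraph V'}
    (e : G ≃g G') (u v : V') : pivot G (e.symm u) (e.symm v) ≃g pivot G' u v where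
  toEquiv := e.toEquiv
  map_rel_iff' := by
    intro x y
    obtain ⟨a, rfl⟩ : ∃ a, u = e a := ⟨e.symm u, by simp⟩
    obtain ⟨c, rfl⟩ : ∃ c, v = e c := ⟨e.symm v, by simp⟩
    simp only [pivot, localComp, sdFlip_adj, RelIso.coe_fn_toEquiv, RelIso.symm_apply_apply,
      e.map_adj_iff, ne_eq, EmbeddingLike.apply_eq_iff_eq]

/-- Transport of `induce` along an isomorphism. -/
def induceIsoAux {V : Type u} {V' : Type v} {G : SimpleGraph V} {G' : SimpleGraph V'}
    (e : G ≃g G') (S : Set V') : G.induce (⇑e ⁻¹' S) ≃g G'.induce S where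
  toEquiv := e.toEquiv.subtypeEquiv fun a => Iff.rfl
  map_rel_iff' := by
    intro x y
    simp [Equiv.subtypeEquiv, e.map_adj_iff]

/-- `a+1 = b` or `b+1 = a`. -/
def adjP (a b : ℕ) : Prop := a + 1 = b ∨ b + 1 = a

def F0 (i t a b : ℕ) : Prop :=
  a ≠ b ∧ Xor' (adjP a b) (i ≤ a ∧ a < i + t ∧ i ≤ b ∧ b < i + t)

def F1 (i t a b : ℕ) : Prop :=
  a ≠ b ∧ Xor' (adjP a b)
    (i ≤ a ∧ a < i + t ∧ i ≤ b ∧ b < i + t ∧ (a < i + 3 ∨ b < i + 3))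

def inB (i a : ℕ) : Prop := a = i ∨ a = i + 1 ∨ a = i + 2 ∨ a = i + 3 ∨ a = i + 5

def F2 (i t a b : ℕ) : Prop := a ≠ b ∧ Xor' (F1 i t a b) (inB i a ∧ inB i b)

def inC (i t a : ℕ) : Prop := a = i ∨ a = i + 2 ∨ a = i + 4 ∨ (i + 6 ≤ a ∧ a < i + t)

def F3 (i t a b : ℕ) : Prop := a ≠ b ∧ Xor' (F2 i t a b) (inC i t a ∧ inC i t b)

lemma setFlip_consec_adj (s i t : ℕ) (x y : Fin s) :
    (setFlip (pathGraph s) (consec s i t)).Adj x y ↔ F0 i t x.val y.val := by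
  simp [setFlip, sdFlip_adj, consec, pathGraph_adj, F0, adjP, ne_eq, Fin.ext_iff, Xor', xor_def] <;> omega

section Core

variable {s t i : ℕ}

lemma nbr1 (ht : 6 ≤ t) (hts : i + t ≤ s) (a : ℕ) (ha : a < s) :
    F1 i t (i + 4) a ↔ inB i a := by
  simp [F1, inB, adjP, Xor', xor_def] <;> omega

lemma nbr2 (ht : 6 ≤ t) (hts : i + t ≤ s) (a : ℕ) (ha : a < s) :
    F2 i t (i + 1) a ↔ inC i t a := by
  simp [F2, F1, inB, inC, adjP, Xor', xor_def] <;> omega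

set_option maxHeartbeats 4000000 in
lemma adj1 (ht : 6 ≤ t) (hts : i + t ≤ s) (hu : i + 1 < s) (x y : Fin s) :
    (localComp (setFlip (pathGraph s) (consec s i t)) ⟨i + 1, hu⟩).Adj x y ↔
      F1 i t x.val y.val := by
  have hx := x.isLt; have hy := y.isLt
  simp [localComp_adj, setFlip_consec_adj, ne_eq, Fin.ext_iff, F0, F1, adjP, Xor', xor_def] <;> omega

set_option maxHeartbeats 4000000 in
lemma adj2 (ht : 6 ≤ t) (hts : i + t ≤ s) (hu : i + 1 < s) (hv : i + 4 < s) (x y : Fin s) :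
    (localComp (localComp (setFlip (pathGraph s) (consec s i t)) ⟨i + 1, hu⟩)
      ⟨i + 4, hv⟩).Adj x y ↔ F2 i t x.val y.val := by
  have hx := x.isLt; have hy := y.isLt
  rw [localComp_adj]
  simp only [adj1 ht hts hu]
  rw [nbr1 ht hts x.val hx, nbr1 ht hts y.val hy]
  simp only [F2, ne_eq, Fin.ext_iff, Xor', xor_def]
  tauto

set_option maxHeartbeats 4000000 in
lemma adj3 (ht : 6 ≤ t) (hts : i + t ≤ s) (hu : i + 1 < s) (hv : i + 4 < s) (x y : Fin s) :
    (pivot (setFlip (pathGraph s) (consec s i t)) ⟨i + 1, hu⟩ ⟨i + 4, hv⟩).Adj x y ↔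
      F3 i t x.val y.val := by
  have hx := x.isLt; have hy := y.isLt
  rw [pivot, localComp_adj]
  simp only [adj2 ht hts hu hv]
  rw [nbr2 ht hts x.val hx, nbr2 ht hts y.val hy]
  simp only [F3, ne_eq, Fin.ext_iff, Xor', xor_def]
  tauto

set_option maxHeartbeats 4000000 in
lemma coreAdj (ht : 6 ≤ t) (hts : i + t ≤ s) (a b A B : ℕ)
    (haA : (a ≤ i ∧ A = a) ∨ (i + 1 ≤ a ∧ a ≤ i + 2 ∧ A = a + 1) ∨ (i + 3 ≤ a ∧ A = a + 2))
    (hbB : (b ≤ i ∧ B = b) ∨ (i + 1 ≤ b ∧ b ≤ i + 2 ∧ B = b + 1) ∨ (i + 3 ≤ b ∧ B = b + 2))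
    (ha : a < s - 2) (hb : b < s - 2) :
    F3 i t A B ↔ F0 (i + 4) (t - 6) a b := by
  rcases haA with ⟨h1, rfl⟩ | ⟨h1, h2, rfl⟩ | ⟨h1, rfl⟩ <;>
    rcases hbB with ⟨g1, rfl⟩ | ⟨g1, g2, rfl⟩ | ⟨g1, rfl⟩ <;>
    simp [F3, F2, F1, F0, inB, inC, adjP, Xor', xor_def] <;> omega

set_option maxHeartbeats 4000000 in
lemma core (ht : 6 ≤ t) (hts : i + t ≤ s) (hu : i + 1 < s) (hv : i + 4 < s) :
    Nonempty ((setFlip (pathGraph (s - 2)) (consec (s - 2) (i + 4) (t - 6))) ≃g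
      (pivot (setFlip (pathGraph s) (consec s i t)) ⟨i + 1, hu⟩ ⟨i + 4, hv⟩).induce
        {x : Fin s | x.val ≠ i + 1 ∧ x.val ≠ i + 4}) := by
  classical
  have fspec : ∀ j : ℕ, j < s - 2 →
      ((j ≤ i ∧ (if j < i + 1 then j else if j < i + 3 then j + 1 else j + 2) = j) ∨
       (i + 1 ≤ j ∧ j ≤ i + 2 ∧
         (if j < i + 1 then j else if j < i + 3 then j + 1 else j + 2) = j + 1) ∨
       (i + 3 ≤ j ∧ (if j < i + 1 then j else if j < i + 3 then j + 1 else j + 2) = j + 2)) := by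
    intro j hj; split_ifs <;> omega
  refine ⟨{ toFun := fun j => ⟨⟨if j.val < i + 1 then j.val else
                if j.val < i + 3 then j.val + 1 else j.val + 2, ?_⟩, ?_⟩,
            invFun := fun x => ⟨if x.val.val < i + 1 then x.val.val else
                if x.val.val < i + 5 then x.val.val - 1 else x.val.val - 2, ?_⟩,
            left_inv := ?_, right_inv := ?_, map_rel_iff' := ?_ }⟩
  · have := j.isLt; split_ifs <;> omega
  · have := j.isLt
    simp only [Set.mem_setOf_eq]
    split_ifs <;> omega
  · have := x.val.isLt
    have hx := x.property
    simp only [Set.mem_setOf_eq] at hx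
    split_ifs <;> omega
  · intro j
    have := j.isLt
    apply Fin.ext
    simp only
    split_ifs <;> omega
  · intro x
    have := x.val.isLt
    have hx := x.property
    simp only [Set.mem_setOf_eq] at hx
    apply Subtype.ext
    apply Fin.ext
    simp only
    split_ifs <;> omega
  · intro a b
    simp only [Equiv.coe_fn_mk, comap_adj, Function.Embedding.coe_subtype, adj3 ht hts hu hv,
      setFlip_consec_adj]
    exact coreAdj ht hts a.val b.val _ _ (fspec a.val a.isLt) (fspec b.val b.isLt) a.isLt b.isLt

end Core

/-! ## Statement 15 -/
set_option maxHeartbeats 4000000 in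
set_option maxHeartbeats 4000000 in
theorem stmt15 (s t : ℕ) (hts : t ≤ s) (ht : 6 ≤ t) {W : Type} [Fintype W]
    (G : SimpleGraph W) (hG : IsSTPath s t G) :
    ∃ H : SimpleGraph (Fin (s - 2)), IsSTPath (s - 2) (t - 6) H ∧ IsPivotMinorOf H G := by
  obtain ⟨i, hit, ⟨e⟩⟩ := hG
  have hu : i + 1 < s := by omega
  have hv : i + 4 < s := by omega
  refine ⟨setFlip (pathGraph (s - 2)) (consec (s - 2) (i + 4) (t - 6)),
    ⟨i + 4, by omega, ⟨RelIso.refl _⟩⟩, ?_⟩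
  obtain ⟨ι⟩ := core ht hit hu hv
  let u₀ : Fin s := ⟨i + 1, hu⟩
  let v₀ : Fin s := ⟨i + 4, hv⟩
  let ep := pivotIsoAux e u₀ v₀
  refine ⟨[(e.symm u₀, e.symm v₀)], ⇑ep ⁻¹' {x : Fin s | x.val ≠ i + 1 ∧ x.val ≠ i + 4},
    ⟨?_, trivial⟩, ⟨ι.trans (induceIsoAux ep _).symm⟩⟩
  rw [e.symm.map_adj_iff]
  rw [setFlip_consec_adj]
  simp [F0, adjP, Xor', xor_def, u₀, v₀] <;> omega
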